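/- (Wraparound soundness, large-coordinate case.) Let d ∈ ℕ, B ≥ 0, α > 0, and let q be a real number with q > 4α√B. Let X ∈ ℤ^d with |X_i| ≤ q/2 for all i, and suppose there exists an index i* with |X_{i*}| > 2α√B. Let Z₁,…,Z_d be independent random variables, each equal to 1 with probability 1/4, to −1 with probability 1/4, and to 0 with probability 1/2, and set Y = ∑_{i=1}^d Z_i X_i. Then the probability that there exists an integer t with Y − t·q ∈ [−α√B, α√B] is at most 1/2. -/

import Mathlib

open MeasureTheory ProbabilityTheory
open scoped ENNReal

/-- **wraparound soundness, large-coordinate case.** Let `q > 4α√B` and let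
`X ∈ ℤ^d` with `|X i| ≤ q/2` for all `i` and `|X i⋆| > 2α√B` for some index `i⋆`. For
`Y = ∑ i, Z i * X i` with `Z₁, …, Z_d` independent (`1` w.p. `1/4`, `-1` w.p. `1/4`,
`0` w.p. `1/2`), the probability that some integer `t` satisfies
`Y - t q ∈ [-α√B, α√B]` is at most `1/2`. -/
theorem wraparound_soundness_large_max
    {Ω : Type*} [MeasureSpace Ω] [IsProbabilityMeasure (ℙ : Measure Ω)]
    (d : ℕ) (B α q : ℝ) (hB : 0 ≤ B) (hα : 0 < α)
    (hq : 4 * α * Real.sqrt B < q)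
    (X : Fin d → ℤ) (hbound : ∀ i, |(X i : ℝ)| ≤ q / 2)
    (hlarge : ∃ istar : Fin d, 2 * α * Real.sqrt B < |(X istar : ℝ)|)
    (Z : Fin d → Ω → ℝ)
    (hZmeas : ∀ i, Measurable (Z i))
    (hindep : iIndepFun Z ℙ)
    (hone : ∀ i, ℙ {ω | Z i ω = 1} = 1/4)
    (hnegone : ∀ i, ℙ {ω | Z i ω = -1} = 1/4)
    (hzero : ∀ i, ℙ {ω | Z i ω = 0} = 1/2) :
    ℙ {ω | ∃ t : ℤ, (∑ i, Z i ω * (X i : ℝ)) - (t : ℝ) * q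
        ∈ Set.Icc (-(α * Real.sqrt B)) (α * Real.sqrt B)} ≤ 1/2 := by
  obtain ⟨i, hi⟩ := hlarge
  set a : ℝ := α * Real.sqrt B with ha
  have ha0 : 0 ≤ a := mul_nonneg hα.le (Real.sqrt_nonneg B)
  have hq' : 4 * a < q := by rw [ha]; linarith [hq]
  have hq0 : 0 < q := lt_of_le_of_lt (by linarith) hq'
  have hia : 2 * a < |(X i : ℝ)| := by rw [ha]; linarith [hi]
  have hX0 : (X i : ℝ) ≠ 0 := by
    intro h; rw [h, abs_zero] at hia; linarith
  -- scaled variables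
  set Z' : Fin d → Ω → ℝ := fun j ω => Z j ω * (X j : ℝ) with hZ'
  have hZ'meas : ∀ j, Measurable (Z' j) := fun j => (hZmeas j).mul_const _
  have hZ'indep : iIndepFun Z' ℙ :=
    hindep.comp (fun j x => x * (X j : ℝ)) (fun j => measurable_mul_const _)
  set W : Ω → ℝ := fun ω => ∑ j ∈ Finset.univ.erase i, Z' j ω with hW
  have hWmeas : Measurable W := by
    apply Finset.measurable_sum
    exact fun j _ => hZ'meas j
  have hindepW : IndepFun W (Z' i) ℙ := by
    have := hZ'indep.indepFun_finsetSum_of_notMem hZ'meas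
      (s := Finset.univ.erase i) (Finset.notMem_erase i _)
    convert this using 1
    ext ω
    simp [hW]
  -- the bad set on ℝ
  set T : Set ℝ := ⋃ t : ℤ, Set.Icc ((t : ℝ) * q - a) ((t : ℝ) * q + a) with hT
  have hTmeas : MeasurableSet T := MeasurableSet.iUnion fun t => measurableSet_Icc
  have hTmem : ∀ y : ℝ, y ∈ T ↔ ∃ t : ℤ, y - (t : ℝ) * q ∈ Set.Icc (-a) a := by
    intro y
    simp only [hT, Set.mem_iUnion, Set.mem_Icc]
    constructor
    · rintro ⟨t, h1, h2⟩; exact ⟨t, by constructor <;> linarith⟩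
    · rintro ⟨t, h1, h2⟩; exact ⟨t, by constructor <;> linarith⟩
  -- key disjointness fact
  have hkey : ∀ c w : ℝ, |c| = |(X i : ℝ)| → w + c ∈ T → w ∉ T := by
    intro c w hc h1 h0
    rw [hTmem] at h1 h0
    obtain ⟨t1, ht1a, ht1b⟩ := h1
    obtain ⟨t0, ht0a, ht0b⟩ := h0
    have hcq : |c| ≤ q / 2 := hc ▸ hbound i
    have hca : 2 * a < |c| := hc ▸ hia
    have hdiff : |c - ((t1 : ℝ) - t0) * q| ≤ 2 * a := by
      rw [abs_le]; constructor <;> [skip; skip] <;> nlinarith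
    rcases eq_or_ne t1 t0 with h | h
    · rw [h] at hdiff; simp at hdiff; linarith
    · have : (1 : ℝ) ≤ |(t1 : ℝ) - t0| := by
        have : t1 - t0 ≠ 0 := sub_ne_zero.mpr h
        have := Int.one_le_abs this
        calc (1:ℝ) ≤ |(t1 - t0 : ℤ)| := by exact_mod_cast this
          _ = |(t1 : ℝ) - t0| := by push_cast; ring_nf
      have hkq : q ≤ |((t1 : ℝ) - t0) * q| := by
        rw [abs_mul, abs_of_pos hq0]
        nlinarith
      have := abs_sub_abs_le_abs_sub (((t1 : ℝ) - t0) * q) c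
      rw [abs_sub_comm] at this
      nlinarith
  -- decompose the event
  set A : Set Ω := {ω | ∃ t : ℤ, (∑ j, Z j ω * (X j : ℝ)) - (t : ℝ) * q
      ∈ Set.Icc (-a) a} with hA
  have hYsplit : ∀ ω, (∑ j, Z j ω * (X j : ℝ)) = Z' i ω + W ω := by
    intro ω
    rw [hW]
    simp only [hZ']
    exact (Finset.add_sum_erase _ _ (Finset.mem_univ i)).symm
  have hAmem : ∀ ω, ω ∈ A ↔ Z' i ω + W ω ∈ T := by
    intro ω
    rw [hTmem]
    simp only [hA, Set.mem_setOf_eq, hYsplit ω]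
  -- shifted bad sets
  set g : ℝ → Set ℝ := fun c => {w | w + c ∈ T} with hg
  have hgmeas : ∀ c, MeasurableSet (g c) := fun c =>
    (measurable_add_const c) hTmeas
  -- the three value events for Z' i
  have hS1 : Z' i ⁻¹' {(X i : ℝ)} = {ω | Z i ω = 1} := by
    ext ω; simp only [hZ', Set.mem_preimage, Set.mem_singleton_iff, Set.mem_setOf_eq]
    constructor
    · intro h; have : Z i ω * (X i : ℝ) = 1 * (X i : ℝ) := by rw [h, one_mul]
      exact mul_right_cancel₀ hX0 this
    · intro h; rw [h, one_mul]
  have hSneg : Z' i ⁻¹' {-(X i : ℝ)} = {ω | Z i ω = -1} := by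
    ext ω; simp only [hZ', Set.mem_preimage, Set.mem_singleton_iff, Set.mem_setOf_eq]
    constructor
    · intro h; have : Z i ω * (X i : ℝ) = (-1) * (X i : ℝ) := by rw [h]; ring
      exact mul_right_cancel₀ hX0 this
    · intro h; rw [h]; ring
  have hS0 : Z' i ⁻¹' {(0 : ℝ)} = {ω | Z i ω = 0} := by
    ext ω; simp only [hZ', Set.mem_preimage, Set.mem_singleton_iff, Set.mem_setOf_eq]
    constructor
    · intro h; rcases mul_eq_zero.mp h with h | h
      · exact h
      · exact absurd h hX0
    · intro h; rw [h, zero_mul]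
  -- intersections
  have hint : ∀ c : ℝ, A ∩ Z' i ⁻¹' {c} = W ⁻¹' (g c) ∩ Z' i ⁻¹' {c} := by
    intro c
    ext ω
    simp only [Set.mem_inter_iff, Set.mem_preimage, Set.mem_singleton_iff, hg,
      Set.mem_setOf_eq]
    constructor
    · rintro ⟨hωA, hωc⟩
      refine ⟨?_, hωc⟩
      have := (hAmem ω).mp hωA
      rwa [hωc, add_comm] at this
    · rintro ⟨hωg, hωc⟩
      refine ⟨(hAmem ω).mpr ?_, hωc⟩
      rw [hωc, add_comm]
      exact hωg
  have hprod : ∀ c : ℝ, ℙ (W ⁻¹' (g c) ∩ Z' i ⁻¹' {c})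
      = ℙ (W ⁻¹' (g c)) * ℙ (Z' i ⁻¹' {c}) :=
    fun c => hindepW.measure_inter_preimage_eq_mul _ _ (hgmeas c) (measurableSet_singleton c)
  -- disjointness bounds
  have hdisj1 : ℙ (W ⁻¹' (g (X i : ℝ))) + ℙ (W ⁻¹' (g 0)) ≤ 1 := by
    have hd : Disjoint (W ⁻¹' (g (X i : ℝ))) (W ⁻¹' (g 0)) := by
      rw [Set.disjoint_left]
      intro ω h1 h0
      simp only [Set.mem_preimage, hg, Set.mem_setOf_eq, add_zero] at h1 h0
      exact hkey _ _ rfl h1 h0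
    calc ℙ (W ⁻¹' (g (X i : ℝ))) + ℙ (W ⁻¹' (g 0))
        = ℙ (W ⁻¹' (g (X i : ℝ)) ∪ W ⁻¹' (g 0)) :=
          (measure_union hd (hWmeas (hgmeas 0))).symm
      _ ≤ 1 := prob_le_one
  have hdisjneg : ℙ (W ⁻¹' (g (-(X i : ℝ)))) + ℙ (W ⁻¹' (g 0)) ≤ 1 := by
    have hd : Disjoint (W ⁻¹' (g (-(X i : ℝ)))) (W ⁻¹' (g 0)) := by
      rw [Set.disjoint_left]
      intro ω h1 h0
      simp only [Set.mem_preimage, hg, Set.mem_setOf_eq, add_zero] at h1 h0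
      exact hkey _ _ (abs_neg _) h1 h0
    calc ℙ (W ⁻¹' (g (-(X i : ℝ)))) + ℙ (W ⁻¹' (g 0))
        = ℙ (W ⁻¹' (g (-(X i : ℝ))) ∪ W ⁻¹' (g 0)) :=
          (measure_union hd (hWmeas (hgmeas 0))).symm
      _ ≤ 1 := prob_le_one
  -- the three value events cover almost everything
  have hcover : ℙ ((Z' i ⁻¹' {(X i : ℝ)} ∪ Z' i ⁻¹' {-(X i : ℝ)} ∪ Z' i ⁻¹' {(0:ℝ)})ᶜ) = 0 := by
    have hd1 : Disjoint (Z' i ⁻¹' {(X i : ℝ)}) (Z' i ⁻¹' {-(X i : ℝ)}) := by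
      rw [Set.disjoint_left]
      intro ω h1 h2
      simp only [Set.mem_preimage, Set.mem_singleton_iff] at h1 h2
      rw [h1] at h2
      have : (X i : ℝ) = 0 := by linarith
      exact hX0 this
    have hd2 : Disjoint (Z' i ⁻¹' {(X i : ℝ)} ∪ Z' i ⁻¹' {-(X i : ℝ)}) (Z' i ⁻¹' {(0:ℝ)}) := by
      rw [Set.disjoint_left]
      intro ω h1 h2
      simp only [Set.mem_preimage, Set.mem_singleton_iff, Set.mem_union] at h1 h2
      rcases h1 with h1 | h1 <;> rw [h2] at h1
      · exact hX0 h1.symm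
      · exact hX0 (by linarith)
    have hm1 : MeasurableSet (Z' i ⁻¹' {(X i : ℝ)}) := hZ'meas i (measurableSet_singleton _)
    have hm2 : MeasurableSet (Z' i ⁻¹' {-(X i : ℝ)}) := hZ'meas i (measurableSet_singleton _)
    have hm0 : MeasurableSet (Z' i ⁻¹' {(0:ℝ)}) := hZ'meas i (measurableSet_singleton _)
    have hval : ℙ (Z' i ⁻¹' {(X i : ℝ)} ∪ Z' i ⁻¹' {-(X i : ℝ)} ∪ Z' i ⁻¹' {(0:ℝ)}) = 1 := by
      rw [measure_union hd2 hm0, measure_union hd1 hm2, hS1, hSneg, hS0,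
        hone i, hnegone i, hzero i]
      have h : (4⁻¹ + 4⁻¹ : ℝ≥0∞) = 2⁻¹ := by
        rw [show (4:ℝ≥0∞) = 2*2 by norm_num, ENNReal.mul_inv (by norm_num) (by norm_num),
          ← two_mul, ← mul_assoc, ENNReal.mul_inv_cancel (by norm_num) (by norm_num), one_mul]
      norm_num [h, ENNReal.inv_two_add_inv_two]
    rw [measure_compl ((hm1.union hm2).union hm0) (measure_ne_top _ _), hval,
      measure_univ]
    simp
  -- put it together
  have hsub : A ⊆ (A ∩ Z' i ⁻¹' {(X i : ℝ)}) ∪ (A ∩ Z' i ⁻¹' {-(X i : ℝ)})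
      ∪ (A ∩ Z' i ⁻¹' {(0:ℝ)})
      ∪ (Z' i ⁻¹' {(X i : ℝ)} ∪ Z' i ⁻¹' {-(X i : ℝ)} ∪ Z' i ⁻¹' {(0:ℝ)})ᶜ := by
    intro ω hω
    by_cases h : ω ∈ Z' i ⁻¹' {(X i : ℝ)} ∪ Z' i ⁻¹' {-(X i : ℝ)} ∪ Z' i ⁻¹' {(0:ℝ)}
    · rcases h with (h | h) | h
      · exact Or.inl (Or.inl (Or.inl ⟨hω, h⟩))
      · exact Or.inl (Or.inl (Or.inr ⟨hω, h⟩))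
      · exact Or.inl (Or.inr ⟨hω, h⟩)
    · exact Or.inr h
  have hgoal : ℙ A ≤ 1/2 := by
    calc ℙ A ≤ ℙ ((A ∩ Z' i ⁻¹' {(X i : ℝ)}) ∪ (A ∩ Z' i ⁻¹' {-(X i : ℝ)})
        ∪ (A ∩ Z' i ⁻¹' {(0:ℝ)})
        ∪ (Z' i ⁻¹' {(X i : ℝ)} ∪ Z' i ⁻¹' {-(X i : ℝ)} ∪ Z' i ⁻¹' {(0:ℝ)})ᶜ) :=
          measure_mono hsub
      _ ≤ ℙ (A ∩ Z' i ⁻¹' {(X i : ℝ)}) + ℙ (A ∩ Z' i ⁻¹' {-(X i : ℝ)})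
          + ℙ (A ∩ Z' i ⁻¹' {(0:ℝ)})
          + ℙ ((Z' i ⁻¹' {(X i : ℝ)} ∪ Z' i ⁻¹' {-(X i : ℝ)} ∪ Z' i ⁻¹' {(0:ℝ)})ᶜ) := by
          refine le_trans (measure_union_le _ _) ?_
          gcongr
          refine le_trans (measure_union_le _ _) ?_
          gcongr
          exact measure_union_le _ _
      _ = ℙ (W ⁻¹' (g (X i : ℝ))) * (1/4) + ℙ (W ⁻¹' (g (-(X i : ℝ)))) * (1/4)
          + ℙ (W ⁻¹' (g 0)) * (1/2) + 0 := by
          rw [hcover, hint, hint, hint, hprod, hprod, hprod, hS1, hSneg, hS0,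
            hone i, hnegone i, hzero i]
      _ ≤ 1/2 := by
          have h : (1/2 : ℝ≥0∞) = 1/4 + 1/4 := by
            rw [ENNReal.div_add_div_same]
            rw [ENNReal.div_eq_div_iff (by norm_num) (by norm_num) (by norm_num) (by norm_num)]
            norm_num
          calc ℙ (W ⁻¹' (g (X i : ℝ))) * (1/4) + ℙ (W ⁻¹' (g (-(X i : ℝ)))) * (1/4)
              + ℙ (W ⁻¹' (g 0)) * (1/2) + 0
              = (ℙ (W ⁻¹' (g (X i : ℝ))) + ℙ (W ⁻¹' (g 0))) * (1/4)
                + (ℙ (W ⁻¹' (g (-(X i : ℝ)))) + ℙ (W ⁻¹' (g 0))) * (1/4) := by rw [h]; ring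
            _ ≤ 1 * (1/4) + 1 * (1/4) := by gcongr
            _ = 1/2 := by rw [one_mul, h]
  exact hgoal
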